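/- Let (X,d) be a metric space, ε > 0 and x,y ∈ X with d_ε(x,y) < ∞. Then there exists z ∈ X such that |2 d_ε(x,z) − d_ε(x,y)| ≤ 5ε and |2 d_ε(y,z) − d_ε(x,y)| ≤ 5ε. -/

import Mathlib

open Metric ENNReal

/-- The sum of distances along an `ε`-chain, and the `ε`-chain metric `d_ε`:
the infimum of total lengths of `ε`-chains from `x` to `y` (infimum of the
empty set being `∞`). An `ε`-chain from `x` to `y` is a finite sequence
`x_0, …, x_N` (`N ≥ 1`) with `x_0 = x`, `x_N = y` and `ρ (x_i) (x_{i+1}) < ε`. -/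
noncomputable def chainDist {X : Type*} (ρ : X → X → ℝ) (ε : ℝ) (x y : X) : ℝ≥0∞ :=
  ⨅ c : {c : ℕ × (ℕ → X) // 0 < c.1 ∧ c.2 0 = x ∧ c.2 c.1 = y ∧
      ∀ i < c.1, ρ (c.2 i) (c.2 (i + 1)) < ε},
    ∑ i ∈ Finset.range c.val.1, ENNReal.ofReal (ρ (c.val.2 i) (c.val.2 (i + 1)))

section aux
variable {X : Type*} [MetricSpace X] {ε : ℝ}

lemma chainDist_le_sum (x y : X) {N : ℕ} {f : ℕ → X} (hN : 0 < N)
    (h0 : f 0 = x) (hNy : f N = y) (hs : ∀ i < N, dist (f i) (f (i + 1)) < ε) :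
    chainDist dist ε x y ≤ ∑ i ∈ Finset.range N, ENNReal.ofReal (dist (f i) (f (i + 1))) :=
  by unfold chainDist; exact iInf_le _ (⟨(N, f), hN, h0, hNy, hs⟩ : {c : ℕ × (ℕ → X) // 0 < c.1 ∧ c.2 0 = x ∧ c.2 c.1 = y ∧
      ∀ i < c.1, dist (c.2 i) (c.2 (i + 1)) < ε})

lemma chainDist_symm_le (x y : X) : chainDist dist ε x y ≤ chainDist dist ε y x := by
  unfold chainDist
  refine le_iInf fun c => ?_
  obtain ⟨⟨N, f⟩, hN, h0, hNy, hs⟩ := c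
  dsimp only at hN h0 hNy hs
  have steps : ∀ i < N, dist (f (N - i)) (f (N - (i + 1))) < ε := by
    intro i hi
    have h1 : N - i = N - (i + 1) + 1 := by omega
    rw [dist_comm, h1]
    exact hs _ (by omega)
  have key := chainDist_le_sum x y (f := fun i => f (N - i)) hN (by simp [hNy]) (by simp [h0]) steps
  refine le_trans key (le_of_eq ?_)
  rw [← Finset.sum_range_reflect (fun j => ENNReal.ofReal (dist (f j) (f (j + 1)))) N]
  refine Finset.sum_congr rfl fun i hi => ?_
  have hi' := Finset.mem_range.1 hi
  have e2 : N - 1 - i + 1 = N - i := by omega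
  have e1 : N - 1 - i = N - (i + 1) := by omega
  rw [e2, e1, dist_comm]

lemma chainDist_symm (x y : X) : chainDist dist ε x y = chainDist dist ε y x :=
  le_antisymm (chainDist_symm_le x y) (chainDist_symm_le y x)

lemma chainDist_triangle (x z y : X) :
    chainDist dist ε x y ≤ chainDist dist ε x z + chainDist dist ε z y := by
  conv_rhs => unfold chainDist
  rw [ENNReal.iInf_add]
  refine le_iInf fun c1 => ?_
  rw [ENNReal.add_iInf]
  refine le_iInf fun c2 => ?_
  obtain ⟨⟨N1, f⟩, hN1, hf0, hfN, hf⟩ := c1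
  obtain ⟨⟨N2, g⟩, hN2, hg0, hgN, hg⟩ := c2
  dsimp only at hN1 hf0 hfN hf hN2 hg0 hgN hg
  set F : ℕ → X := fun i => if i ≤ N1 then f i else g (i - N1) with hF
  have hF1 : ∀ i < N1, F i = f i ∧ F (i + 1) = f (i + 1) := fun i hi =>
    ⟨if_pos (by omega), if_pos (by omega)⟩
  have hF2 : ∀ i < N2, F (N1 + i) = g i ∧ F (N1 + i + 1) = g (i + 1) := by
    intro i hi
    constructor
    · rcases Nat.eq_zero_or_pos i with rfl | hpos
      · simpa [hF] using hfN.trans hg0.symm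
      · simp only [hF, if_neg (show ¬ N1 + i ≤ N1 by omega)]
        congr 1
        omega
    · simp only [hF, if_neg (show ¬ N1 + i + 1 ≤ N1 by omega)]
      congr 1
      omega
  have hF0 : F 0 = x := by simp [hF, hf0]
  have hFN : F (N1 + N2) = y := by
    simp only [hF, if_neg (show ¬ N1 + N2 ≤ N1 by omega)]
    rw [show N1 + N2 - N1 = N2 by omega, hgN]
  have hstepF : ∀ i < N1 + N2, dist (F i) (F (i + 1)) < ε := by
    intro i hi
    rcases lt_or_ge i N1 with h | h
    · rw [(hF1 i h).1, (hF1 i h).2]; exact hf i h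
    · obtain ⟨j, rfl⟩ : ∃ j, i = N1 + j := ⟨i - N1, by omega⟩
      have hj : j < N2 := by omega
      rw [(hF2 j hj).1, (hF2 j hj).2]; exact hg j hj
  refine le_trans (chainDist_le_sum x y (by omega) hF0 hFN hstepF) (le_of_eq ?_)
  rw [Finset.sum_range_add]
  congr 1
  · exact Finset.sum_congr rfl fun i hi => by
      rw [(hF1 i (Finset.mem_range.1 hi)).1, (hF1 i (Finset.mem_range.1 hi)).2]
  · exact Finset.sum_congr rfl fun i hi => by
      rw [(hF2 i (Finset.mem_range.1 hi)).1, (hF2 i (Finset.mem_range.1 hi)).2]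

lemma chainDist_self_le (hε : 0 < ε) (x : X) : chainDist dist ε x x ≤ 0 := by
  simpa using chainDist_le_sum x x (N := 1) (f := fun _ => x) one_pos rfl rfl
    (fun i _ => by simpa using hε)

lemma exists_chain (hε : 0 < ε) (x y : X) (hfin : chainDist dist ε x y ≠ ∞) :
    ∃ (N : ℕ) (f : ℕ → X), 0 < N ∧ f 0 = x ∧ f N = y ∧ (∀ i < N, dist (f i) (f (i + 1)) < ε) ∧
      ENNReal.ofReal (∑ i ∈ Finset.range N, dist (f i) (f (i + 1))) <
        chainDist dist ε x y + ENNReal.ofReal ε := by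
  have h : chainDist dist ε x y < chainDist dist ε x y + ENNReal.ofReal ε :=
    ENNReal.lt_add_right hfin (ENNReal.ofReal_pos.2 hε).ne'
  rw [chainDist, iInf_lt_iff] at h
  obtain ⟨⟨⟨N, f⟩, hN, h0, hN', hs⟩, hc⟩ := h
  refine ⟨N, f, hN, h0, hN', hs, ?_⟩
  rwa [ENNReal.ofReal_sum_of_nonneg (fun i _ => dist_nonneg)]

end aux

/-- Lemma A.3: approximate midpoints for the `ε`-chain metric.
If `d_ε(x,y) < ∞` then there is `z` with `|2 d_ε(x,z) − d_ε(x,y)| ≤ 5ε` and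
`|2 d_ε(y,z) − d_ε(x,y)| ≤ 5ε` (the absolute-value inequalities being expressed
as pairs of one-sided inequalities in `ℝ≥0∞`). -/
theorem chainDist_approx_midpoint {X : Type*} [MetricSpace X] (ε : ℝ) (hε : 0 < ε)
    (x y : X) (hfin : chainDist dist ε x y ≠ ∞) :
    ∃ z : X,
      (2 * chainDist dist ε x z ≤ chainDist dist ε x y + ENNReal.ofReal (5 * ε) ∧
        chainDist dist ε x y ≤ 2 * chainDist dist ε x z + ENNReal.ofReal (5 * ε)) ∧
      (2 * chainDist dist ε y z ≤ chainDist dist ε x y + ENNReal.ofReal (5 * ε) ∧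
        chainDist dist ε x y ≤ 2 * chainDist dist ε y z + ENNReal.ofReal (5 * ε)) := by
  classical
  obtain ⟨N, f, hN, hf0, hfN, hstep, hsum⟩ := exists_chain hε x y hfin
  set D := chainDist dist ε x y with hD
  set L : ℝ := ∑ i ∈ Finset.range N, dist (f i) (f (i + 1)) with hLdef
  have hL0 : 0 ≤ L := Finset.sum_nonneg fun i _ => dist_nonneg
  set S : ℕ → ℝ := fun k => ∑ i ∈ Finset.range k, dist (f i) (f (i + 1)) with hSdef
  have hSN : S N = L := rfl
  have hex : ∃ k, L ≤ 2 * S k := ⟨N, by rw [hSN]; linarith⟩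
  set k := Nat.find hex with hk
  have hkspec : L ≤ 2 * S k := Nat.find_spec hex
  have hkN : k ≤ N := Nat.find_le (by rw [hSN]; linarith)
  have hSk0 : 0 ≤ S k := Finset.sum_nonneg fun i _ => dist_nonneg
  have hSkL : S k ≤ L := by
    rw [← hSN]
    exact Finset.sum_le_sum_of_subset_of_nonneg (Finset.range_subset_range.2 hkN)
      fun i _ _ => dist_nonneg
  have hupper : 2 * S k ≤ L + 2 * ε := by
    rcases Nat.eq_zero_or_pos k with hk0 | hk0
    · have h0 : S k = 0 := by rw [hk0]; simp [hSdef]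
      rw [h0]; linarith
    · have h1 : ¬ L ≤ 2 * S (k - 1) := by
        have hlt : k - 1 < Nat.find hex := by rw [← hk]; omega
        exact Nat.find_min hex hlt
      have h2 : S k = S (k - 1) + dist (f (k - 1)) (f (k - 1 + 1)) := by
        rw [hSdef]
        simp only
        rw [← Finset.sum_range_succ, Nat.sub_add_cancel hk0]
      have h3 : dist (f (k - 1)) (f (k - 1 + 1)) < ε := hstep (k - 1) (by omega)
      push_neg at h1
      linarith
  refine ⟨f k, ?_⟩
  set A := chainDist dist ε x (f k) with hA'
  set B := chainDist dist ε (f k) y with hB'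
  have hA : A ≤ ENNReal.ofReal (S k) := by
    rcases Nat.eq_zero_or_pos k with hk0 | hk0
    · have hz : f k = x := by rw [hk0, hf0]
      rw [hA', hz]
      exact le_trans (chainDist_self_le hε x) zero_le
    · refine le_trans (chainDist_le_sum x (f k) hk0 hf0 rfl fun i hi => hstep i (by omega)) ?_
      exact le_of_eq (ENNReal.ofReal_sum_of_nonneg fun i _ => dist_nonneg).symm
  have hB : B ≤ ENNReal.ofReal (L - S k) := by
    rcases eq_or_lt_of_le hkN with hkN' | hkN'
    · have hz : f k = y := by rw [hkN', hfN]
      rw [hB', hz]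
      exact le_trans (chainDist_self_le hε y) zero_le
    · have htail : ∑ i ∈ Finset.range (N - k), dist (f (k + i)) (f (k + i + 1)) = L - S k := by
        have h' := Finset.sum_range_add (fun i => dist (f i) (f (i + 1))) k (N - k)
        rw [show k + (N - k) = N by omega] at h'
        have h'' : L = S k + ∑ i ∈ Finset.range (N - k), dist (f (k + i)) (f (k + i + 1)) := h'
        linarith
      have hch := chainDist_le_sum (f k) y (f := fun i => f (k + i)) (N := N - k) (by omega)
        (by simp) (by show f (k + (N - k)) = y; rw [show k + (N - k) = N by omega]; exact hfN)
        (fun i hi => by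
          have := hstep (k + i) (by omega)
          simpa [add_assoc] using this)
      refine hch.trans (le_of_eq ?_)
      rw [← htail, ENNReal.ofReal_sum_of_nonneg fun i _ => dist_nonneg]
      refine Finset.sum_congr rfl fun i _ => ?_
      show ENNReal.ofReal (dist (f (k + i)) (f (k + (i + 1)))) =
        ENNReal.ofReal (dist (f (k + i)) (f (k + i + 1)))
      rw [← add_assoc]
  have htri : D ≤ A + B := chainDist_triangle x (f k) y
  have hsymm : chainDist dist ε y (f k) = B := chainDist_symm y (f k)
  have two_eq : (2 : ℝ≥0∞) = ENNReal.ofReal 2 := by simp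
  have h2A : 2 * A ≤ D + ENNReal.ofReal (3 * ε) := by
    calc 2 * A ≤ 2 * ENNReal.ofReal (S k) := mul_le_mul_right hA 2
      _ = ENNReal.ofReal (2 * S k) := by
          rw [two_eq, ← ENNReal.ofReal_mul (by norm_num)]
      _ ≤ ENNReal.ofReal (L + 2 * ε) := ENNReal.ofReal_le_ofReal hupper
      _ ≤ ENNReal.ofReal L + ENNReal.ofReal (2 * ε) := ENNReal.ofReal_add_le
      _ ≤ (D + ENNReal.ofReal ε) + ENNReal.ofReal (2 * ε) := add_le_add_left hsum.le _
      _ = D + (ENNReal.ofReal ε + ENNReal.ofReal (2 * ε)) := by ring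
      _ = D + ENNReal.ofReal (3 * ε) := by
          rw [← ENNReal.ofReal_add hε.le (by linarith),
            show ε + 2 * ε = 3 * ε by ring]
  have h2B : 2 * B ≤ D + ENNReal.ofReal ε := by
    calc 2 * B ≤ 2 * ENNReal.ofReal (L - S k) := mul_le_mul_right hB 2
      _ = ENNReal.ofReal (2 * (L - S k)) := by
          rw [two_eq, ← ENNReal.ofReal_mul (by norm_num)]
      _ ≤ ENNReal.ofReal L := ENNReal.ofReal_le_ofReal (by linarith)
      _ ≤ D + ENNReal.ofReal ε := hsum.le
  have h35 : ENNReal.ofReal (3 * ε) ≤ ENNReal.ofReal (5 * ε) :=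
    ENNReal.ofReal_le_ofReal (by linarith)
  have h15 : ENNReal.ofReal ε ≤ ENNReal.ofReal (5 * ε) :=
    ENNReal.ofReal_le_ofReal (by linarith)
  refine ⟨⟨h2A.trans (add_le_add_right h35 D), ?_⟩, ?_, ?_⟩
  · -- D ≤ 2 * A + 5ε
    have key : D + D ≤ (2 * A + ENNReal.ofReal ε) + D := by
      calc D + D = 2 * D := (two_mul D).symm
        _ ≤ 2 * (A + B) := mul_le_mul_right htri 2
        _ = 2 * A + 2 * B := mul_add 2 A B
        _ ≤ 2 * A + (D + ENNReal.ofReal ε) := add_le_add_right h2B _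
        _ = (2 * A + ENNReal.ofReal ε) + D := by ring
    have := (ENNReal.add_le_add_iff_right hfin).1 key
    exact this.trans (add_le_add_right h15 _)
  · rw [hsymm]
    exact h2B.trans (add_le_add_right h15 D)
  · rw [hsymm]
    have key : D + D ≤ (2 * B + ENNReal.ofReal (3 * ε)) + D := by
      calc D + D = 2 * D := (two_mul D).symm
        _ ≤ 2 * (A + B) := mul_le_mul_right htri 2
        _ = 2 * A + 2 * B := mul_add 2 A B
        _ ≤ (D + ENNReal.ofReal (3 * ε)) + 2 * B := add_le_add_left h2A _
        _ = (2 * B + ENNReal.ofReal (3 * ε)) + D := by ring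
    have := (ENNReal.add_le_add_iff_right hfin).1 key
    exact this.trans (add_le_add_right h35 _)
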